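/- Let M = A ⊕ B with A and B orthogonal and B square-free, C a submodule of M, and f : C → M a monomorphism. Then f(C ∩ B) ∩ (C ∩ B) is essential in both f(C ∩ B) and C ∩ B. -/
import Mathlib


universe u v w

section Defs

variable {R : Type u} [Ring R]

/-- `N` is an essential submodule of `M`. -/
def EssentialSub {M : Type v} [AddCommGroup M] [Module R M] (N : Submodule R M) : Prop :=
  ∀ K : Submodule R M, K ⊓ N = ⊥ → K = ⊥

/-- `N` is essential in `P` (both submodules of `M`, `N ≤ P`). -/
def EssentialIn {M : Type v} [AddCommGroup M] [Module R M] (N P : Submodule R M) : Prop :=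
  N ≤ P ∧ ∀ K : Submodule R M, K ≤ P → K ⊓ N = ⊥ → K = ⊥

/-- `N` is a closed submodule of `M`: it has no proper essential extension in `M`. -/
def ClosedSub {M : Type v} [AddCommGroup M] [Module R M] (N : Submodule R M) : Prop :=
  ∀ P : Submodule R M, EssentialIn N P → N = P

/-- `i : M →ₗ[R] E` realizes `E` as an injective hull of `M`. -/
structure IsInjectiveHull {M : Type v} {E : Type w} [AddCommGroup M] [Module R M]
    [AddCommGroup E] [Module R E] (i : M →ₗ[R] E) : Prop where
  inj : Function.Injective i
  injE : Module.Injective R E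
  ess : EssentialSub (LinearMap.range i)

/-- `M` is invariant under every automorphism of the hull `E` given by `i`. -/
def HullAutInv {M : Type v} {E : Type w} [AddCommGroup M] [Module R M]
    [AddCommGroup E] [Module R E] (i : M →ₗ[R] E) : Prop :=
  ∀ g : E ≃ₗ[R] E, ∀ m : M, g (i m) ∈ LinearMap.range i

end Defs

/-- `M` is automorphism-invariant: invariant under all automorphisms of its injective hull. -/
def AutInvariant (R : Type u) [Ring R] (M : Type v) [AddCommGroup M] [Module R M] : Prop :=
  ∀ (E : Type v) [AddCommGroup E] [Module R E] (i : M →ₗ[R] E),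
    IsInjectiveHull i → HullAutInv i

/-- Every monomorphism from a submodule of `M` into `M` extends to an endomorphism of `M`. -/
def PseudoInjective (R : Type u) [Ring R] (M : Type v) [AddCommGroup M] [Module R M] : Prop :=
  ∀ (A : Submodule R M) (f : A →ₗ[R] M), Function.Injective f →
    ∃ g : M →ₗ[R] M, ∀ a : A, g a = f a

/-- Every homomorphism from a submodule of `M` into `M` extends to an endomorphism of `M`. -/
def QuasiInjective (R : Type u) [Ring R] (M : Type v) [AddCommGroup M] [Module R M] : Prop :=
  ∀ (A : Submodule R M) (f : A →ₗ[R] M), ∃ g : M →ₗ[R] M, ∀ a : A, g a = f a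

/-- `X` is `Y`-injective. -/
def RelInjective (R : Type u) [Ring R] (X : Type v) (Y : Type w) [AddCommGroup X] [Module R X]
    [AddCommGroup Y] [Module R Y] : Prop :=
  ∀ (A : Submodule R Y) (f : A →ₗ[R] X), ∃ g : Y →ₗ[R] X, ∀ a : A, g a = f a

/-- `M` contains no direct sum of two nonzero isomorphic submodules. -/
def SquareFreeMod (R : Type u) [Ring R] (M : Type v) [AddCommGroup M] [Module R M] : Prop :=
  ∀ (A B : Submodule R M), A ⊓ B = ⊥ → Nonempty (A ≃ₗ[R] B) → A = ⊥

/-- `X` and `Y` have no nonzero isomorphic submodules. -/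
def OrthogonalMod (R : Type u) [Ring R] (X : Type v) (Y : Type w) [AddCommGroup X] [Module R X]
    [AddCommGroup Y] [Module R Y] : Prop :=
  ∀ (A : Submodule R X) (B : Submodule R Y), Nonempty (A ≃ₗ[R] B) → A = ⊥

/-- No nonzero element of `M` is annihilated by an essential (right) ideal of `R`. -/
def NonsingularMod (R : Type u) [Ring R] (M : Type v) [AddCommGroup M] [Module R M] : Prop :=
  ∀ m : M, EssentialSub (LinearMap.ker (LinearMap.toSpanSingleton R M m)) → m = 0


/-- Key lemma: if `N` is a submodule of `C` landing in `C ⊓ B` whose images under `f` and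
under the inclusion are disjoint, then `N = ⊥`. -/
private theorem key_lemma {R : Type u} [Ring R]
    {M : Type v} [AddCommGroup M] [Module R M]
    (A B : Submodule R M) (hcompl : IsCompl A B)
    (horth : OrthogonalMod R ↥A ↥B) (hsf : SquareFreeMod R ↥B)
    (C : Submodule R M) (f : ↥C →ₗ[R] M) (hf : Function.Injective f)
    (N : Submodule R ↥C) (hNle : N ≤ (C ⊓ B).comap C.subtype)
    (hdisj : Submodule.map f N ⊓ Submodule.map C.subtype N = ⊥) : N = ⊥ := by
  set L : Submodule R M := Submodule.map f N with hL
  have hSle : Submodule.map C.subtype N ≤ B := by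
    have h1 := Submodule.map_mono (f := C.subtype) hNle
    rw [Submodule.map_comap_subtype] at h1
    exact h1.trans (le_trans inf_le_right inf_le_right)
  -- Step 1 : L ⊓ B = ⊥
  have hLB : L ⊓ B = ⊥ := by
    set N' : Submodule R ↥C := N ⊓ Submodule.comap f (L ⊓ B) with hN'
    have hmapfN' : Submodule.map f N' = L ⊓ B := by
      apply le_antisymm
      · exact le_trans (Submodule.map_mono inf_le_right) (Submodule.map_comap_le f _)
      · rintro x ⟨hxL, hxB⟩
        obtain ⟨c, hc, rfl⟩ := hxL
        exact ⟨c, ⟨hc, ⟨Submodule.mem_map_of_mem hc, hxB⟩⟩, rfl⟩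
    set X : Submodule R M := Submodule.map C.subtype N' with hX
    have hXB : X ≤ B := le_trans (Submodule.map_mono inf_le_left) hSle
    have hXdisj : (L ⊓ B) ⊓ X = ⊥ := by
      rw [eq_bot_iff]
      refine le_trans ?_ hdisj.le
      exact inf_le_inf (le_trans inf_le_left le_rfl)
        (Submodule.map_mono inf_le_left)
    -- build the isomorphism between `L ⊓ B` and `X` (as submodules of `B`)
    have e1 : ↥N' ≃ₗ[R] ↥(L ⊓ B) :=
      (Submodule.equivMapOfInjective f hf N').trans (LinearEquiv.ofEq _ _ hmapfN')
    have e2 : ↥N' ≃ₗ[R] ↥X :=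
      Submodule.equivMapOfInjective C.subtype (Submodule.injective_subtype C) N'
    have hLBle : L ⊓ B ≤ B := inf_le_right
    have hcomapbot : (L ⊓ B).comap B.subtype = ⊥ := by
      refine hsf _ (X.comap B.subtype) ?_ ?_
      · rw [← Submodule.comap_inf, hXdisj, Submodule.comap_bot, Submodule.ker_subtype]
      · exact ⟨(Submodule.comapSubtypeEquivOfLe hLBle).trans
          ((e1.symm.trans e2).trans (Submodule.comapSubtypeEquivOfLe hXB).symm)⟩
    have h2 := congrArg (Submodule.map B.subtype) hcomapbot
    rw [Submodule.map_comap_subtype, Submodule.map_bot,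
      inf_eq_right.mpr hLBle] at h2
    exact h2
  -- Step 2 : the projection to `A` composed with `f` is injective on `N`
  set π : M →ₗ[R] ↥A := Submodule.linearProjOfIsCompl A B hcompl with hπ
  set g : ↥N →ₗ[R] ↥A := π.comp (f.comp N.subtype) with hg'
  have hfN_bot : ∀ n : ↥C, n ∈ N → f n ∈ B → n = 0 := by
    intro n hn hB
    have hmem : f n ∈ L ⊓ B := ⟨Submodule.mem_map_of_mem hn, hB⟩
    rw [hLB, Submodule.mem_bot] at hmem
    have : f n = f 0 := by rw [hmem, map_zero]
    exact hf this
  have hg : Function.Injective g := by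
    rw [← LinearMap.ker_eq_bot, eq_bot_iff]
    rintro ⟨n, hn⟩ hker
    rw [LinearMap.mem_ker] at hker
    have hB : f n ∈ B := by
      have := (Submodule.linearProjOfIsCompl_apply_eq_zero_iff hcompl
        (x := f n)).mp hker
      exact this
    have : n = 0 := hfN_bot n hn hB
    rw [Submodule.mem_bot]
    exact Subtype.ext (by simpa using this)
  have eg : ↥N ≃ₗ[R] ↥(LinearMap.range g) := LinearEquiv.ofInjective g hg
  have eS : ↥N ≃ₗ[R] ↥(Submodule.map C.subtype N) :=
    Submodule.equivMapOfInjective C.subtype (Submodule.injective_subtype C) N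
  have hrange : LinearMap.range g = ⊥ :=
    horth (LinearMap.range g) ((Submodule.map C.subtype N).comap B.subtype)
      ⟨eg.symm.trans (eS.trans (Submodule.comapSubtypeEquivOfLe hSle).symm)⟩
  rw [Submodule.eq_bot_iff]
  intro n hn
  have hgn : g ⟨n, hn⟩ = 0 := by
    have : g ⟨n, hn⟩ ∈ LinearMap.range g := ⟨⟨n, hn⟩, rfl⟩
    rwa [hrange, Submodule.mem_bot] at this
  have hB : f n ∈ B := by
    have := (Submodule.linearProjOfIsCompl_apply_eq_zero_iff hcompl
      (x := f n)).mp hgn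
    exact this
  have : n = 0 := hfN_bot n hn hB
  simpa [Submodule.mem_bot] using this

/-- for `M = A ⊕ B` with `A`, `B` orthogonal and `B` square-free, `C ≤ M`
and a monomorphism `f : C → M`, `f(C ∩ B) ∩ (C ∩ B)` is essential in both `f(C ∩ B)` and
`C ∩ B`. -/
theorem image_inter_essential_both {R : Type u} [Ring R]
    {M : Type v} [AddCommGroup M] [Module R M]
    (A B : Submodule R M) (hcompl : IsCompl A B)
    (horth : OrthogonalMod R ↥A ↥B) (hsf : SquareFreeMod R ↥B)
    (C : Submodule R M) (f : ↥C →ₗ[R] M) (hf : Function.Injective f) :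
    EssentialIn (Submodule.map f ((C ⊓ B).comap C.subtype) ⊓ (C ⊓ B))
        (Submodule.map f ((C ⊓ B).comap C.subtype)) ∧
      EssentialIn (Submodule.map f ((C ⊓ B).comap C.subtype) ⊓ (C ⊓ B)) (C ⊓ B) :=  by
  set D : Submodule R M := C ⊓ B with hD
  set mapfD : Submodule R M := Submodule.map f (D.comap C.subtype) with hmapfD
  constructor
  · refine ⟨inf_le_left, ?_⟩
    intro K hK hbot
    have hKD : K ⊓ D = ⊥ := by
      have : K ⊓ (mapfD ⊓ D) = K ⊓ D := by
        rw [← inf_assoc, inf_eq_left.mpr hK]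
      rw [← this, hbot]
    set N : Submodule R ↥C := Submodule.comap f K ⊓ D.comap C.subtype with hN
    have hNle : N ≤ D.comap C.subtype := inf_le_right
    have hmap : Submodule.map f N = K := by
      apply le_antisymm
      · exact le_trans (Submodule.map_mono inf_le_left) (Submodule.map_comap_le f K)
      · intro k hk
        obtain ⟨c, hc, rfl⟩ := hK hk
        exact ⟨c, ⟨hk, hc⟩, rfl⟩
    have hdisj : Submodule.map f N ⊓ Submodule.map C.subtype N = ⊥ := by
      rw [eq_bot_iff, ← hKD, hmap]
      refine inf_le_inf le_rfl ?_
      have h1 := Submodule.map_mono (f := C.subtype) hNle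
      rw [Submodule.map_comap_subtype] at h1
      exact h1.trans inf_le_right
    have hNbot := key_lemma A B hcompl horth hsf C f hf N hNle hdisj
    rw [← hmap, hNbot, Submodule.map_bot]
  · refine ⟨inf_le_right, ?_⟩
    intro K hK hbot
    have hKf : K ⊓ mapfD = ⊥ := by
      have : K ⊓ (mapfD ⊓ D) = K ⊓ mapfD := by
        rw [inf_comm mapfD D, ← inf_assoc, inf_eq_left.mpr hK]
      rw [← this, hbot]
    set N : Submodule R ↥C := K.comap C.subtype with hN
    have hNle : N ≤ D.comap C.subtype := Submodule.comap_mono hK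
    have hmapS : Submodule.map C.subtype N = K := by
      rw [hN, Submodule.map_comap_subtype]
      exact inf_eq_right.mpr (hK.trans inf_le_left)
    have hdisj : Submodule.map f N ⊓ Submodule.map C.subtype N = ⊥ := by
      rw [eq_bot_iff, ← hKf, hmapS, inf_comm K mapfD]
      exact inf_le_inf (Submodule.map_mono hNle) le_rfl
    have hNbot := key_lemma A B hcompl horth hsf C f hf N hNle hdisj
    rw [← hmapS, hNbot, Submodule.map_bot]
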